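/- Let G : 2^{V∪V̄} → ℝ be submodular, non-negative, with G(∅) = 0 and G(V∪V̄) = 0, and let g be its Lovász extension. Fix x ∈ ℝ^N with minimum entry a and maximum entry b. Then for any x̄ ∈ ℝ^M, g(x, x̄) ≥ g(x, P_{a,b}(x̄)), where P_{a,b} clips every entry of x̄ to the interval [a, b]. Consequently min over x̄ ∈ ℝ^M of g(x, x̄) equals the min over x̄ ∈ [a,b]^M. -/

import Mathlib

open scoped Classical
open MeasureTheory

/-- The Lovász extension of a set function `F` (with `F ∅ = 0`), defined equivalently to the
sorted telescoping sum via the level-set integral formula. -/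
noncomputable def lovasz {α : Type*} [Fintype α] (F : Set α → ℝ) (x : α → ℝ) : ℝ :=
  (⨅ i, x i) * F Set.univ +
    ∫ t in Set.Ioc (⨅ i, x i) (⨆ i, x i), F {i | t < x i}

/-- `F(S₁) + F(S₂) ≥ F(S₁ ∪ S₂) + F(S₁ ∩ S₂)`. -/
def Submodular {α : Type*} (F : Set α → ℝ) : Prop :=
  ∀ A B : Set α, F (A ∪ B) + F (A ∩ B) ≤ F A + F B

lemma lovasz_integrableOn {γ : Type*} [Fintype γ] (G : Set γ → ℝ) (w : γ → ℝ) (c d : ℝ) :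
    IntegrableOn (fun t => G {i | t < w i}) (Set.Ioc c d) := by
  classical
  have hfun : (fun t => G {i | t < w i}) =
      fun t => ∑ S : Finset γ,
        Set.indicator (⋂ i, {t : ℝ | t < w i ↔ i ∈ S}) (fun _ => G ↑S) t := by
    funext t
    rw [Finset.sum_eq_single (Finset.univ.filter (fun i => t < w i))]
    · rw [Set.indicator_of_mem]
      · congr 1; ext i; simp
      · simp [Set.mem_iInter]
    · intro S _ hS
      rw [Set.indicator_of_notMem]
      simp only [Set.mem_iInter, Set.mem_setOf_eq]
      intro h
      apply hS
      ext i
      simp [← h i]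
    · intro h; exact absurd (Finset.mem_univ _) h
  rw [hfun]
  apply integrable_finset_sum
  intro S _
  apply Integrable.indicator
  · exact integrableOn_const measure_Ioc_lt_top.ne
  · apply MeasurableSet.iInter
    intro i
    by_cases hi : i ∈ S
    · simp only [hi, iff_true]
      exact measurableSet_Iio
    · simp only [hi, iff_false, not_lt]
      exact measurableSet_Ici


/-- Clipping lemma: for submodular, non-negative `G` with `G ∅ = 0` and `G(V ∪ V̄) = 0`, and
`x` with minimum entry `a` and maximum entry `b`, clipping the auxiliary part `x̄` to `[a,b]`
does not increase the Lovász extension; hence the min over `ℝ^M` equals the min over `[a,b]^M`. -/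
theorem stmt_8 {α β : Type*} [Fintype α] [Fintype β] [Nonempty α] (G : Set (α ⊕ β) → ℝ)
    (hG : Submodular G) (hGnn : ∀ S, 0 ≤ G S) (hG0 : G ∅ = 0) (hGV : G Set.univ = 0)
    (x : α → ℝ) (a b : ℝ) (ha : a = ⨅ i, x i) (hb : b = ⨆ i, x i) :
    (∀ xb : β → ℝ,
      lovasz G (Sum.elim x fun j => max a (min b (xb j))) ≤ lovasz G (Sum.elim x xb)) ∧
    (⨅ xb : β → ℝ, lovasz G (Sum.elim x xb))
      = ⨅ xb : {xb : β → ℝ // ∀ j, xb j ∈ Set.Icc a b}, lovasz G (Sum.elim x xb.1) := by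
  classical
  obtain ⟨i₀⟩ := ‹Nonempty α›
  have hax : ∀ i, a ≤ x i := fun i => ha ▸ ciInf_le (Finite.bddBelow_range x) i
  have hxb : ∀ i, x i ≤ b := fun i => hb ▸ le_ciSup (Finite.bddAbove_range x) i
  have hab : a ≤ b := (hax i₀).trans (hxb i₀)
  -- main clipping inequality
  have main : ∀ xb : β → ℝ,
      lovasz G (Sum.elim x fun j => max a (min b (xb j))) ≤ lovasz G (Sum.elim x xb) := by
    intro xb
    set y : α ⊕ β → ℝ := Sum.elim x xb with hy
    set y' : α ⊕ β → ℝ := Sum.elim x (fun j => max a (min b (xb j))) with hy'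
    have hy'mem : ∀ i, a ≤ y' i ∧ y' i ≤ b := by
      rintro (i | j)
      · exact ⟨hax i, hxb i⟩
      · exact ⟨le_max_left _ _, max_le hab ((min_le_left _ _))⟩
    have hinf' : (⨅ i, y' i) = a := by
      apply le_antisymm
      · rw [ha]
        exact le_ciInf fun i => ciInf_le (Finite.bddBelow_range y') (Sum.inl i)
      · exact le_ciInf fun i => (hy'mem i).1
    have hsup' : (⨆ i, y' i) = b := by
      apply le_antisymm
      · exact ciSup_le fun i => (hy'mem i).2
      · rw [hb]
        exact ciSup_le fun i => le_ciSup (Finite.bddAbove_range y') (Sum.inl i)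
    have hinfy : (⨅ i, y i) ≤ a := by
      rw [ha]
      exact le_ciInf fun i => ciInf_le (Finite.bddBelow_range y) (Sum.inl i)
    have hsupy : b ≤ (⨆ i, y i) := by
      rw [hb]
      exact ciSup_le fun i => le_ciSup (Finite.bddAbove_range y) (Sum.inl i)
    -- level sets agree on Ioo a b
    have hlevel : ∀ t ∈ Set.Ioo a b, {i | t < y' i} = {i | t < y i} := by
      rintro t ⟨hta, htb⟩
      ext (i | j)
      · simp [hy, hy']
      · simp only [Set.mem_setOf_eq, hy, hy', Sum.elim_inr]
        constructor
        · intro h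
          rcases lt_max_iff.1 h with h | h
          · exact absurd h (not_lt_of_gt hta)
          · exact (lt_min_iff.1 h).2
        · intro h
          exact lt_max_iff.2 (Or.inr (lt_min_iff.2 ⟨htb, h⟩))
    have int_y : IntegrableOn (fun t => G {i | t < y i})
        (Set.Ioc (⨅ i, y i) (⨆ i, y i)) := lovasz_integrableOn G y _ _
    have step1 : (∫ t in Set.Ioc a b, G {i | t < y' i})
        = ∫ t in Set.Ioc a b, G {i | t < y i} := by
      rw [setIntegral_congr_set (Ioo_ae_eq_Ioc (a := a) (b := b)).symm,
          setIntegral_congr_set (Ioo_ae_eq_Ioc (a := a) (b := b)).symm]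
      exact setIntegral_congr_fun measurableSet_Ioo fun t ht => by rw [hlevel t ht]
    have step2 : (∫ t in Set.Ioc a b, G {i | t < y i})
        ≤ ∫ t in Set.Ioc (⨅ i, y i) (⨆ i, y i), G {i | t < y i} := by
      apply setIntegral_mono_set int_y
      · exact Filter.Eventually.of_forall fun t => hGnn _
      · exact HasSubset.Subset.eventuallyLE (Set.Ioc_subset_Ioc hinfy hsupy)
    calc lovasz G y' = ∫ t in Set.Ioc a b, G {i | t < y' i} := by
          rw [lovasz, hGV, mul_zero, zero_add, hinf', hsup']
      _ = ∫ t in Set.Ioc a b, G {i | t < y i} := step1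
      _ ≤ ∫ t in Set.Ioc (⨅ i, y i) (⨆ i, y i), G {i | t < y i} := step2
      _ = lovasz G y := by rw [lovasz, hGV, mul_zero, zero_add]
  refine ⟨main, ?_⟩
  -- nonnegativity of lovasz values
  have hnn : ∀ w : α ⊕ β → ℝ, 0 ≤ lovasz G w := by
    intro w
    rw [lovasz, hGV, mul_zero, zero_add]
    exact setIntegral_nonneg measurableSet_Ioc fun t _ => hGnn _
  have hne : Nonempty {xb : β → ℝ // ∀ j, xb j ∈ Set.Icc a b} :=
    ⟨⟨fun _ => a, fun j => ⟨le_refl a, hab⟩⟩⟩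
  apply le_antisymm
  · exact le_ciInf fun xb => ciInf_le ⟨0, fun v ⟨w, hw⟩ => hw ▸ hnn _⟩ xb.1
  · refine le_ciInf fun xb => ?_
    have hmem : ∀ j, (fun j => max a (min b (xb j))) j ∈ Set.Icc a b := fun j =>
      ⟨le_max_left _ _, max_le hab (min_le_left _ _)⟩
    calc (⨅ xb : {xb : β → ℝ // ∀ j, xb j ∈ Set.Icc a b}, lovasz G (Sum.elim x xb.1))
        ≤ lovasz G (Sum.elim x fun j => max a (min b (xb j))) :=
          ciInf_le (f := fun xb : {xb : β → ℝ // ∀ j, xb j ∈ Set.Icc a b} => lovasz G (Sum.elim x xb.1))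
            ⟨0, fun v ⟨w, hw⟩ => hw ▸ hnn _⟩ ⟨_, hmem⟩
      _ ≤ lovasz G (Sum.elim x xb) := main xb
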